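/- Let a < b and let γ : [a, b] → ℝ³ be a continuously differentiable closed curve (γ(a) = γ(b)), let O ∈ ℝ³, and set N := (1/2)∫ₐᵇ (γ(t) − O) ×ᵥ γ′(t) dt. Then for every pair of orthonormal vectors u, v ∈ ℝ³ the absolute value of the signed area of the orthogonal projection of γ on the plane spanned by u and v, namely |(1/2)∫ₐᵇ (⟨γ(t) − O, u⟩⟨γ′(t), v⟩ − ⟨γ(t) − O, v⟩⟨γ′(t), u⟩) dt|, is at most ‖N‖; moreover, there exists an orthonormal pair u, v for which this signed area equals ‖N‖. Hence the maximum over all planes of the (absolute) projected area equals the magnitude of the bi-vector associated to γ, attained when the projection plane has the orientation of the bi-vector. (Peano, 1890.) -/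

import Mathlib

open Matrix
open scoped RealInnerProductSpace

/-- The cross product on Euclidean 3-space. -/
noncomputable def cross3 (u v : EuclideanSpace ℝ (Fin 3)) : EuclideanSpace ℝ (Fin 3) :=
  (WithLp.equiv 2 (Fin 3 → ℝ)).symm
    (crossProduct ((WithLp.equiv 2 (Fin 3 → ℝ)) u) ((WithLp.equiv 2 (Fin 3 → ℝ)) v))

lemma inner3 (x y : EuclideanSpace ℝ (Fin 3)) :
    ⟪x, y⟫ = x 0 * y 0 + x 1 * y 1 + x 2 * y 2 := by
  simp [PiLp.inner_apply, Fin.sum_univ_three, mul_comm]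

lemma cross3_apply (x y : EuclideanSpace ℝ (Fin 3)) :
    cross3 x y = (WithLp.equiv 2 (Fin 3 → ℝ)).symm
      ![x 1 * y 2 - x 2 * y 1, x 2 * y 0 - x 0 * y 2, x 0 * y 1 - x 1 * y 0] := by
  simp [cross3, cross_apply]

lemma cross3_0 (x y : EuclideanSpace ℝ (Fin 3)) : cross3 x y 0 = x 1 * y 2 - x 2 * y 1 := by
  rw [cross3_apply]; rfl
lemma cross3_1 (x y : EuclideanSpace ℝ (Fin 3)) : cross3 x y 1 = x 2 * y 0 - x 0 * y 2 := by
  rw [cross3_apply]; rfl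
lemma cross3_2 (x y : EuclideanSpace ℝ (Fin 3)) : cross3 x y 2 = x 0 * y 1 - x 1 * y 0 := by
  rw [cross3_apply]; rfl

lemma binet (x y u v : EuclideanSpace ℝ (Fin 3)) :
    ⟪cross3 x y, cross3 u v⟫ = ⟪x, u⟫ * ⟪y, v⟫ - ⟪x, v⟫ * ⟪y, u⟫ := by
  simp only [inner3, cross3_0, cross3_1, cross3_2]; ring

lemma bac_cab (x y z : EuclideanSpace ℝ (Fin 3)) :
    cross3 x (cross3 y z) = ⟪x, z⟫ • y - ⟪x, y⟫ • z := by
  ext i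
  fin_cases i
  · show cross3 x (cross3 y z) 0 = (⟪x, z⟫ • y - ⟪x, y⟫ • z) 0
    simp only [PiLp.sub_apply, PiLp.smul_apply, smul_eq_mul, inner3,
      cross3_0, cross3_1, cross3_2]; ring
  · show cross3 x (cross3 y z) 1 = (⟪x, z⟫ • y - ⟪x, y⟫ • z) 1
    simp only [PiLp.sub_apply, PiLp.smul_apply, smul_eq_mul, inner3,
      cross3_0, cross3_1, cross3_2]; ring
  · show cross3 x (cross3 y z) 2 = (⟪x, z⟫ • y - ⟪x, y⟫ • z) 2
    simp only [PiLp.sub_apply, PiLp.smul_apply, smul_eq_mul, inner3,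
      cross3_0, cross3_1, cross3_2]; ring

lemma triple_zero (x y : EuclideanSpace ℝ (Fin 3)) : ⟪x, cross3 y x⟫ = 0 := by
  simp only [inner3, cross3_0, cross3_1, cross3_2]; ring

lemma cross3_continuousOn {f g : ℝ → EuclideanSpace ℝ (Fin 3)} {s : Set ℝ}
    (hf : ContinuousOn f s) (hg : ContinuousOn g s) :
    ContinuousOn (fun t => cross3 (f t) (g t)) s := by
  have hcoord : ∀ (h : ℝ → EuclideanSpace ℝ (Fin 3)), ContinuousOn h s →
      ∀ i, ContinuousOn (fun t => h t i) s := fun h hh i =>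
    (EuclideanSpace.proj i).continuous.comp_continuousOn hh
  have : ContinuousOn (fun t => (WithLp.equiv 2 (Fin 3 → ℝ))
      (cross3 (f t) (g t))) s := by
    apply continuousOn_pi.2
    intro i
    fin_cases i
    · show ContinuousOn (fun t => cross3 (f t) (g t) 0) s
      simp only [cross3_0]; exact ((hcoord f hf 1).mul (hcoord g hg 2)).sub
        ((hcoord f hf 2).mul (hcoord g hg 1))
    · show ContinuousOn (fun t => cross3 (f t) (g t) 1) s
      simp only [cross3_1]; exact ((hcoord f hf 2).mul (hcoord g hg 0)).sub
        ((hcoord f hf 0).mul (hcoord g hg 2))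
    · show ContinuousOn (fun t => cross3 (f t) (g t) 2) s
      simp only [cross3_2]; exact ((hcoord f hf 0).mul (hcoord g hg 1)).sub
        ((hcoord f hf 1).mul (hcoord g hg 0))
  exact (PiLp.continuous_toLp 2 (fun _ : Fin 3 => ℝ)).comp_continuousOn this

lemma exists_unit_orthogonal (w : EuclideanSpace ℝ (Fin 3)) :
    ∃ u : EuclideanSpace ℝ (Fin 3), ‖u‖ = 1 ∧ ⟪u, w⟫ = 0 := by
  have hne : ((ℝ ∙ w)ᗮ : Submodule ℝ (EuclideanSpace ℝ (Fin 3))) ≠ ⊥ := by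
    intro h
    have hsum := Submodule.finrank_add_finrank_orthogonal (K := (ℝ ∙ w))
    have h0 : Module.finrank ℝ ((ℝ ∙ w)ᗮ : Submodule ℝ (EuclideanSpace ℝ (Fin 3))) = 0 := by
      rw [h]; exact finrank_bot ℝ _
    simp only [h0, finrank_euclideanSpace, Fintype.card_fin, add_zero] at hsum
    have hle : Module.finrank ℝ (ℝ ∙ w) ≤ 1 := by
      simpa using finrank_span_le_card ({w} : Set (EuclideanSpace ℝ (Fin 3)))
    omega
  obtain ⟨x, hx, hx0⟩ := Submodule.exists_mem_ne_zero_of_ne_bot hne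
  refine ⟨‖x‖⁻¹ • x, norm_smul_inv_norm hx0, ?_⟩
  have hxw : ⟪x, w⟫ = 0 := by
    have := hx w (Submodule.mem_span_singleton_self w)
    rwa [real_inner_comm] at this
  rw [real_inner_smul_left, hxw, mul_zero]

lemma norm_eq_one_of_inner {x : EuclideanSpace ℝ (Fin 3)} (h : ⟪x, x⟫ = 1) : ‖x‖ = 1 := by
  rw [real_inner_self_eq_norm_mul_norm] at h
  nlinarith [norm_nonneg x]

/-- Peano (1890): for a closed C¹ curve `γ` with bi-vector
`N = (1/2)∫ₐᵇ (γ − O) ×ᵥ γ′ dt`, the absolute signed area of the orthogonal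
projection of `γ` on the plane spanned by any orthonormal pair `u`, `v` is at
most `‖N‖`, and this value `‖N‖` is attained for some orthonormal pair; thus the
maximum projected area equals the magnitude of the bi-vector of the curve. -/
theorem peano_max_projected_area_eq_bivector_magnitude
    (a b : ℝ) (hab : a < b) (γ γ' : ℝ → EuclideanSpace ℝ (Fin 3))
    (hderiv : ∀ t ∈ Set.Icc a b, HasDerivWithinAt γ (γ' t) (Set.Icc a b) t)
    (hcont : ContinuousOn γ' (Set.Icc a b))
    (hclosed : γ a = γ b)
    (O : EuclideanSpace ℝ (Fin 3))
    (N : EuclideanSpace ℝ (Fin 3))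
    (hN : N = (1 / 2 : ℝ) • ∫ t in a..b, cross3 (γ t - O) (γ' t)) :
    (∀ u v : EuclideanSpace ℝ (Fin 3), ‖u‖ = 1 → ‖v‖ = 1 → ⟪u, v⟫ = 0 →
        |(1 / 2 : ℝ) * ∫ t in a..b,
            (⟪γ t - O, u⟫ * ⟪γ' t, v⟫ - ⟪γ t - O, v⟫ * ⟪γ' t, u⟫)| ≤ ‖N‖) ∧
      (∃ u v : EuclideanSpace ℝ (Fin 3), ‖u‖ = 1 ∧ ‖v‖ = 1 ∧ ⟪u, v⟫ = 0 ∧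
        (1 / 2 : ℝ) * ∫ t in a..b,
            (⟪γ t - O, u⟫ * ⟪γ' t, v⟫ - ⟪γ t - O, v⟫ * ⟪γ' t, u⟫) = ‖N‖) := by
  set F : ℝ → EuclideanSpace ℝ (Fin 3) := fun t => cross3 (γ t - O) (γ' t) with hF
  have hγc : ContinuousOn γ (Set.Icc a b) := fun t ht => (hderiv t ht).continuousWithinAt
  have hFc : ContinuousOn F (Set.Icc a b) :=
    cross3_continuousOn (hγc.sub continuousOn_const) hcont
  have hFi : IntervalIntegrable F MeasureTheory.volume a b :=
    (by rwa [Set.uIcc_of_le hab.le] : ContinuousOn F (Set.uIcc a b)).intervalIntegrable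
  have key : ∀ u v : EuclideanSpace ℝ (Fin 3),
      (1 / 2 : ℝ) * ∫ t in a..b,
          (⟪γ t - O, u⟫ * ⟪γ' t, v⟫ - ⟪γ t - O, v⟫ * ⟪γ' t, u⟫) = ⟪N, cross3 u v⟫ := by
    intro u v
    have h1 : ∀ t : ℝ, ⟪γ t - O, u⟫ * ⟪γ' t, v⟫ - ⟪γ t - O, v⟫ * ⟪γ' t, u⟫ =
        (innerSL ℝ (cross3 u v)) (F t) := by
      intro t
      rw [innerSL_apply_apply, real_inner_comm, binet, real_inner_comm (γ t - O) u,
        real_inner_comm (γ' t) v, real_inner_comm (γ' t) u, real_inner_comm (γ t - O) v]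
      ring
    simp_rw [h1]
    rw [(innerSL ℝ (cross3 u v)).intervalIntegral_comp_comm hFi, innerSL_apply_apply, hN,
      real_inner_smul_left, real_inner_comm]
  constructor
  · intro u v hu hv huv
    rw [key u v]
    have hw : ‖cross3 u v‖ = 1 := by
      apply norm_eq_one_of_inner
      rw [binet, huv, real_inner_self_eq_norm_mul_norm, real_inner_self_eq_norm_mul_norm, hu, hv]
      ring
    calc |⟪N, cross3 u v⟫| ≤ ‖N‖ * ‖cross3 u v‖ := abs_real_inner_le_norm N _
      _ = ‖N‖ := by rw [hw, mul_one]
  · -- choose a unit vector w₀ with ⟪N, w₀⟫ = ‖N‖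
    obtain ⟨w₀, hw₀, hNw₀⟩ : ∃ w₀ : EuclideanSpace ℝ (Fin 3), ‖w₀‖ = 1 ∧ ⟪N, w₀⟫ = ‖N‖ := by
      by_cases h0 : N = 0
      · refine ⟨EuclideanSpace.single 0 (1 : ℝ), ?_, ?_⟩
        · simp [EuclideanSpace.norm_single]
        · simp [h0]
      · refine ⟨‖N‖⁻¹ • N, norm_smul_inv_norm h0, ?_⟩
        rw [real_inner_smul_right, real_inner_self_eq_norm_mul_norm]
        field_simp
    obtain ⟨u, hu, huw⟩ := exists_unit_orthogonal w₀
    have huu : ⟪u, u⟫ = 1 := by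
      rw [real_inner_self_eq_norm_mul_norm, hu]; ring
    have hww : ⟪w₀, w₀⟫ = 1 := by
      rw [real_inner_self_eq_norm_mul_norm, hw₀]; ring
    have hwu : ⟪w₀, u⟫ = 0 := by rw [real_inner_comm]; exact huw
    refine ⟨u, cross3 w₀ u, hu, ?_, triple_zero u w₀, ?_⟩
    · apply norm_eq_one_of_inner
      rw [binet, hww, huu, hwu, huw]; ring
    · have hcc : cross3 u (cross3 w₀ u) = w₀ := by
        rw [bac_cab, huu, huw, one_smul, zero_smul, sub_zero]
      rw [key, hcc, hNw₀]
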